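/- The integrator TI3 satisfies Assumption A1. Let b̄₁(ξ²) = ½ sinc(ξ) sinc(ξ/2)² and b₁(ξ²) = sinc(ξ) sinc(ξ/2) cos(ξ/2). Then the symmetry condition sinc(ξ) b₁(ξ²) = (1 + cos ξ) b̄₁(ξ²) holds for all ξ ≥ 0, and there exists a constant c > 0 such that for all ξ ≥ 0: |ξ b̄₁(ξ²)| ≤ c, |ξ² b̄₁(ξ²)| ≤ c, |b̄₁(ξ²) − ½ sinc(ξ/2)| ≤ c ξ, |ξ b₁(ξ²)| ≤ c, |b₁(ξ²) − cos(ξ/2)| ≤ c ξ², and |ξ b₁(ξ²)/sinc(ξ)| ≤ c whenever sinc(ξ) ≠ 0 (indeed ξ b₁(ξ²)/sinc(ξ) = sin ξ wherever sinc(ξ) ≠ 0). -/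

import Mathlib

open scoped Real
open Complex

noncomputable section

/-- `⟨j⟩ = √(j²+1)`. -/
def brk (j : ℤ) : ℝ := Real.sqrt ((j : ℝ) ^ 2 + 1)

/-- `sinc ξ = sin ξ / ξ`, `sinc 0 = 1`. -/
def sinc (x : ℝ) : ℝ := if x = 0 then 1 else Real.sin x / x

/-- Fourier coefficient of a 2π-periodic real-valued function. -/
def fcoeff (u : ℝ → ℝ) (j : ℤ) : ℂ :=
  (1 / (2 * Real.pi) : ℂ) *
    ∫ x in (0 : ℝ)..(2 * Real.pi), (u x : ℂ) * Complex.exp (-Complex.I * (j : ℂ) * (x : ℂ))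

/-- Squared Sobolev norm `‖u‖_s²`. -/
def sobNormSq (s : ℝ) (u : ℝ → ℝ) : ℝ :=
  ∑' j : ℤ, brk j ^ (2 * s) * ‖fcoeff u j‖ ^ 2

/-- Sobolev norm `‖u‖_s`. -/
def sobNorm (s : ℝ) (u : ℝ → ℝ) : ℝ := Real.sqrt (sobNormSq s u)

/-- Membership in `H^s` (2π-periodic with finite Sobolev norm of order `s`). -/
def memHs (s : ℝ) (u : ℝ → ℝ) : Prop :=
  Function.Periodic u (2 * Real.pi) ∧
    Summable fun j : ℤ => brk j ^ (2 * s) * ‖fcoeff u j‖ ^ 2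

/-- Norm `⦀(u,u̇)⦀_s = (‖u‖_{s+1}² + ‖u̇‖_s²)^{1/2}` of a pair. -/
def pairNorm (s : ℝ) (U : (ℝ → ℝ) × (ℝ → ℝ)) : ℝ :=
  Real.sqrt (sobNorm (s + 1) U.1 ^ 2 + sobNorm s U.2 ^ 2)

/-- Membership of a pair in `H^{s+1} × H^s`. -/
def memPair (s : ℝ) (U : (ℝ → ℝ) × (ℝ → ℝ)) : Prop :=
  memHs (s + 1) U.1 ∧ memHs s U.2

/-- Scalar product `⟨v,w⟩_s`. -/
def sobInner (s : ℝ) (v w : ℝ → ℝ) : ℝ :=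
  (∑' j : ℤ, ((brk j ^ (2 * s) : ℝ) : ℂ) * (starRingEnd ℂ (fcoeff v j) * fcoeff w j)).re

/-- Fourier multiplier with symbol `ψ(⟨j⟩)`. -/
def fmul (ψ : ℝ → ℝ) (u : ℝ → ℝ) : ℝ → ℝ := fun x =>
  (∑' j : ℤ, (ψ (brk j) : ℂ) * fcoeff u j * Complex.exp (Complex.I * (j : ℂ) * (x : ℂ))).re

/-- Quasilinear nonlinearity `f(u) = a(u) ∂ₓ²u`. -/
def fQL (a : ℝ → ℝ) (u : ℝ → ℝ) : ℝ → ℝ := fun x => a (u x) * deriv (deriv u) x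

/-- Full nonlinearity `f(u) = a(u) ∂ₓ²u + g(u, ∂ₓu)`. -/
def fFull (a : ℝ → ℝ) (g : ℝ → ℝ → ℝ) (u : ℝ → ℝ) : ℝ → ℝ := fun x =>
  a (u x) * deriv (deriv u) x + g (u x) (deriv u x)

/-- Internal stage `u_{n+1/2} = cos(½hΩ)uₙ + ½h sinc(½hΩ)u̇ₙ`. -/
def tiHalf (h : ℝ) (U : (ℝ → ℝ) × (ℝ → ℝ)) : ℝ → ℝ := fun x =>
  fmul (fun ξ => Real.cos (h / 2 * ξ)) U.1 x + fmul (fun ξ => h / 2 * sinc (h / 2 * ξ)) U.2 x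

/-- One step of the one-stage explicit trigonometric integrator with stepsize `h`,
parameter `κ`, nonlinearity `F` and coefficient functions `b1 ξ = b₁(ξ²)`,
`bb1 ξ = b̄₁(ξ²)` (so that `b₁(V)` is the multiplier with symbol `b1 (h⟨j⟩)`). -/
def tiStep (b1 bb1 : ℝ → ℝ) (h κ : ℝ) (F : (ℝ → ℝ) → ℝ → ℝ)
    (U : (ℝ → ℝ) × (ℝ → ℝ)) : (ℝ → ℝ) × (ℝ → ℝ) :=
  (fun x =>
      fmul (fun ξ => Real.cos (h * ξ)) U.1 x + fmul (fun ξ => h * sinc (h * ξ)) U.2 x +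
        κ * h ^ 2 * fmul (fun ξ => bb1 (h * ξ)) (F (tiHalf h U)) x,
   fun x =>
      fmul (fun ξ => -(ξ * Real.sin (h * ξ))) U.1 x + fmul (fun ξ => Real.cos (h * ξ)) U.2 x +
        κ * h * fmul (fun ξ => b1 (h * ξ)) (F (tiHalf h U)) x)

/-- Assumption A1 on the coefficient functions, with constant `c`. -/
def AssumptionA1 (b1 bb1 : ℝ → ℝ) (c : ℝ) : Prop :=
  (∀ ξ : ℝ, 0 ≤ ξ → sinc ξ * b1 ξ = (1 + Real.cos ξ) * bb1 ξ) ∧ 0 < c ∧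
    ∀ ξ : ℝ, 0 ≤ ξ →
      |ξ * bb1 ξ| ≤ c ∧ |ξ ^ 2 * bb1 ξ| ≤ c ∧ |bb1 ξ - 1 / 2 * sinc (ξ / 2)| ≤ c * ξ ∧
        |ξ * b1 ξ| ≤ c ∧ |b1 ξ - Real.cos (ξ / 2)| ≤ c * ξ ^ 2 ∧
          (sinc ξ ≠ 0 → |ξ * b1 ξ / sinc ξ| ≤ c)

/-- Time derivative `∂ₜu(·,t)` of a space-time function. -/
def udot (u : ℝ → ℝ → ℝ) (t : ℝ) : ℝ → ℝ := fun x => deriv (fun τ => u τ x) t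

/-- `u` solves `∂ₜ²u = ∂ₓ²u − u + κ a(u)∂ₓ²u + κ g(u,∂ₓu)` on `[0,T]`,
2π-periodic in space. -/
def IsExactSol (κ : ℝ) (a : ℝ → ℝ) (g : ℝ → ℝ → ℝ) (T : ℝ) (u : ℝ → ℝ → ℝ) : Prop :=
  (∀ t x : ℝ, u t (x + 2 * Real.pi) = u t x) ∧
    ∀ t ∈ Set.Icc (0 : ℝ) T, ∀ x : ℝ,
      deriv (deriv (fun τ => u τ x)) t =
        deriv (deriv (u t)) x - u t x + κ * a (u t x) * deriv (deriv (u t)) x +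
          κ * g (u t x) (deriv (u t) x)

/-- Assumption A2 with parameter `s`, bound `M`, on `[0,T]`. -/
def AssumptionA2 (κ : ℝ) (a : ℝ → ℝ) (s M T : ℝ) (u : ℝ → ℝ → ℝ) : Prop :=
  (∀ t ∈ Set.Icc (0 : ℝ) T,
      memHs (5 + s) (u t) ∧ memHs (4 + s) (udot u t) ∧
        pairNorm (4 + s) (u t, udot u t) ≤ M) ∧
    ∃ δ A₀ : ℝ, 0 < δ ∧ δ < 1 ∧ 0 ≤ A₀ ∧
      ∀ t ∈ Set.Icc (0 : ℝ) T, ∀ x : ℝ,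
        δ ≤ 1 + κ * a (u t x) ∧ κ * a (u t x) ≤ A₀

/-- The `L²`-orthogonal projection `𝒫^K` onto trigonometric polynomials of degree `≤ K`. -/
def projK (K : ℕ) (u : ℝ → ℝ) : ℝ → ℝ := fun x =>
  (∑ j ∈ Finset.Icc (-(K : ℤ)) (K : ℤ),
      fcoeff u j * Complex.exp (Complex.I * (j : ℂ) * (x : ℂ))).re

/-- Coefficients of trigonometric interpolation in the `2K+1` equidistant points. -/
def interpCoeff (K : ℕ) (u : ℝ → ℝ) (j : ℤ) : ℂ :=
  (1 / (2 * (K : ℂ) + 1)) *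
    ∑ k ∈ Finset.range (2 * K + 1),
      ((u (2 * Real.pi * (k : ℝ) / (2 * (K : ℝ) + 1)) : ℝ) : ℂ) *
        Complex.exp (-Complex.I * (j : ℂ) * ((2 * Real.pi * (k : ℝ) / (2 * (K : ℝ) + 1) : ℝ) : ℂ))

/-- Trigonometric interpolation `ℐ^K`. -/
def interpK (K : ℕ) (u : ℝ → ℝ) : ℝ → ℝ := fun x =>
  (∑ j ∈ Finset.Icc (-(K : ℤ)) (K : ℤ),
      interpCoeff K u j * Complex.exp (Complex.I * (j : ℂ) * (x : ℂ))).re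

/-- `f̂^K(u) = 𝒫^K(a^K(u) ∂ₓ²u)` with `a^K = ℐ^K ∘ a` (quasilinear case). -/
def fhatK (K : ℕ) (a : ℝ → ℝ) (u : ℝ → ℝ) : ℝ → ℝ :=
  projK K fun x => interpK K (fun y => a (u y)) x * deriv (deriv u) x

/-- `f̂^K(u) = 𝒫^K(a^K(u) ∂ₓ²u + g^K(u,∂ₓu))` with `a^K = ℐ^K∘a`, `g^K = ℐ^K∘g`. -/
def fhatFullK (K : ℕ) (a : ℝ → ℝ) (g : ℝ → ℝ → ℝ) (u : ℝ → ℝ) : ℝ → ℝ :=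
  projK K fun x =>
    interpK K (fun y => a (u y)) x * deriv (deriv u) x +
      interpK K (fun y => g (u y) (deriv u y)) x

/-- Membership in the space `𝒱^K` of trigonometric polynomials of degree `≤ K`. -/
def memVK (K : ℕ) (v : ℝ → ℝ) : Prop :=
  ∃ c : ℤ → ℂ, ∀ x : ℝ,
    v x = (∑ j ∈ Finset.Icc (-(K : ℤ)) (K : ℤ),
        c j * Complex.exp (Complex.I * (j : ℂ) * (x : ℂ))).re

/-- The linear flow `Φ_{t,L}`. -/
def PhiL (t : ℝ) (U : (ℝ → ℝ) × (ℝ → ℝ)) : (ℝ → ℝ) × (ℝ → ℝ) :=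
  (fun x => fmul (fun ξ => Real.cos (t * ξ)) U.1 x + fmul (fun ξ => t * sinc (t * ξ)) U.2 x,
   fun x => fmul (fun ξ => -(ξ * Real.sin (t * ξ))) U.1 x + fmul (fun ξ => Real.cos (t * ξ)) U.2 x)

/-- The nonlinear flow `Φ_{t,NL}` (the multiplier `Υ(hΩ)` is built with the full stepsize `h`). -/
def PhiNL (t h : ℝ) (Y : ℝ → ℝ) (N : (ℝ → ℝ) → ℝ → ℝ) (U : (ℝ → ℝ) × (ℝ → ℝ)) :
    (ℝ → ℝ) × (ℝ → ℝ) :=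
  (U.1, fun x => U.2 x + t * fmul (fun ξ => Y (h * ξ)) (N U.1) x)

/-- The integrator TI3, with `b̄₁(ξ²) = ½ sinc(ξ) sinc(ξ/2)²` and
`b₁(ξ²) = sinc(ξ) sinc(ξ/2) cos(ξ/2)`, satisfies Assumption A1; moreover
`ξ b₁(ξ²)/sinc ξ = sin ξ` wherever `sinc ξ ≠ 0`. -/

lemma mul_sinc (x : ℝ) : x * sinc x = Real.sin x := by
  unfold sinc; split
  · simp_all
  · field_simp

lemma abs_sinc_le_one (x : ℝ) : |sinc x| ≤ 1 := by
  unfold sinc; split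
  · simp
  · rw [abs_div]
    exact div_le_one_of_le₀ (Real.abs_sin_le_abs) (abs_nonneg x)

lemma sinc_half (x : ℝ) : sinc x = sinc (x / 2) * Real.cos (x / 2) := by
  unfold sinc
  rcases eq_or_ne x 0 with h | h
  · simp [h]
  · have h2 : x / 2 ≠ 0 := by positivity
    simp only [if_neg h, if_neg h2]
    have hs : Real.sin x = 2 * Real.sin (x/2) * Real.cos (x/2) := by
      rw [show x = 2 * (x/2) by ring, Real.sin_two_mul]; ring_nf
    rw [hs, div_mul_eq_mul_div, div_eq_div_iff h h2]; ring

lemma one_sub_cos_le (x : ℝ) : 1 - Real.cos x ≤ x ^ 2 / 2 := by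
  have h : Real.cos x = 1 - 2 * Real.sin (x/2) ^ 2 := by
    rw [show x = 2 * (x/2) by ring, Real.cos_two_mul, Real.cos_sq']; ring_nf
  have h2 : Real.sin (x/2) ^ 2 ≤ (x/2) ^ 2 := by
    rw [← _root_.sq_abs, ← _root_.sq_abs (x/2)]
    exact pow_le_pow_left₀ (abs_nonneg _) (Real.abs_sin_le_abs) 2
  nlinarith

lemma sinc_lb (x : ℝ) (h0 : 0 ≤ x) (h1 : x ≤ 1) : 1 - x ^ 2 / 4 ≤ sinc x := by
  rcases eq_or_lt_of_le h0 with h | h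
  · simp [sinc, ← h]
  · have := Real.sin_gt_sub_cube h
    rw [sinc, if_neg (ne_of_gt h)]
    rw [le_div_iff₀ h]
    nlinarith

lemma key (x : ℝ) (h0 : 0 ≤ x) (h1 : x ≤ 1) :
    |sinc x ^ 2 * Real.cos x - 1| ≤ x ^ 2 := by
  have hs1 : |sinc x| ≤ 1 := abs_sinc_le_one x
  have hlb : 1 - x ^ 2 / 4 ≤ sinc x := sinc_lb x h0 h1
  have hc1 : Real.cos x ≤ 1 := Real.cos_le_one x
  have hc2 : 1 - x ^ 2 / 2 ≤ Real.cos x := by nlinarith [one_sub_cos_le x]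
  have hub : sinc x ≤ 1 := (abs_le.mp hs1).2
  have hq : (1 - x ^ 2 / 4) ^ 2 ≤ sinc x ^ 2 := pow_le_pow_left₀ (by nlinarith) hlb 2
  have hm : (1 - x ^ 2 / 4) ^ 2 * (1 - x ^ 2 / 2) ≤ sinc x ^ 2 * Real.cos x :=
    mul_le_mul hq hc2 (by nlinarith) (sq_nonneg _)
  rw [abs_le]
  constructor <;> nlinarith [sq_nonneg x, sq_nonneg (x*x), pow_le_one₀ h0 h1 (n := 2)]

set_option maxHeartbeats 1000000 in
theorem TI3_satisfies_A1 :
    ∃ c : ℝ,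
      AssumptionA1 (fun ξ => sinc ξ * sinc (ξ / 2) * Real.cos (ξ / 2))
        (fun ξ => 1 / 2 * (sinc ξ * sinc (ξ / 2) ^ 2)) c ∧
      ∀ ξ : ℝ, 0 ≤ ξ → sinc ξ ≠ 0 →
        ξ * (sinc ξ * sinc (ξ / 2) * Real.cos (ξ / 2)) / sinc ξ = Real.sin ξ := by
  have quot : ∀ ξ : ℝ, sinc ξ ≠ 0 →
      ξ * (sinc ξ * sinc (ξ / 2) * Real.cos (ξ / 2)) / sinc ξ = Real.sin ξ := by
    intro ξ hne
    have hSC : sinc (ξ / 2) * Real.cos (ξ / 2) = sinc ξ := (sinc_half ξ).symm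
    rw [mul_assoc, hSC, ← mul_sinc ξ]
    field_simp
  refine ⟨2, ⟨?_, by norm_num, ?_⟩, fun ξ _ hne => quot ξ hne⟩
  · intro ξ _
    have hc : Real.cos ξ = 2 * Real.cos (ξ / 2) ^ 2 - 1 := by
      rw [show ξ = 2 * (ξ / 2) by ring, Real.cos_two_mul]; ring_nf
    rw [hc, sinc_half ξ]; ring
  · intro ξ hξ
    set S := sinc (ξ / 2) with hSdef
    set C := Real.cos (ξ / 2) with hCdef
    have hS : |S| ≤ 1 := abs_sinc_le_one _
    have hC : |C| ≤ 1 := Real.abs_cos_le_one _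
    have hsin : |Real.sin ξ| ≤ 1 := Real.abs_sin_le_one ξ
    have hsin2 : |Real.sin (ξ / 2)| ≤ 1 := Real.abs_sin_le_one _
    have hSC : S * C = sinc ξ := (sinc_half ξ).symm
    have hS2 : |S| ^ 2 ≤ 1 := pow_le_one₀ (abs_nonneg S) hS
    have hsin2sq : |Real.sin (ξ / 2)| ^ 2 ≤ 1 := pow_le_one₀ (abs_nonneg _) hsin2
    have hSC1 : |S| * |C| ≤ 1 := by nlinarith [abs_nonneg S, abs_nonneg C]
    have hinner2 : |S ^ 2 * C - 1| ≤ 2 := by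
      have h1 : |S ^ 2 * C| ≤ 1 := by
        rw [abs_mul, _root_.abs_pow]
        nlinarith [abs_nonneg C, abs_nonneg S]
      calc |S ^ 2 * C - 1| ≤ |S ^ 2 * C| + |(1 : ℝ)| := abs_sub _ _
        _ ≤ 2 := by rw [abs_one]; linarith
    refine ⟨?_, ?_, ?_, ?_, ?_, ?_⟩
    · have h : ξ * (1 / 2 * (sinc ξ * S ^ 2)) = 1 / 2 * (Real.sin ξ * S ^ 2) := by
        rw [← mul_sinc ξ]; ring
      rw [h, abs_mul, abs_mul, _root_.abs_pow, show |(1:ℝ)/2| = 1/2 from by norm_num]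
      nlinarith [abs_nonneg (Real.sin ξ), abs_nonneg S, hS2, hsin]
    · have h : ξ ^ 2 * (1 / 2 * (sinc ξ * S ^ 2)) =
          2 * (sinc ξ * Real.sin (ξ / 2) ^ 2) := by
        rw [hSdef, ← mul_sinc (ξ / 2)]; ring
      rw [h, abs_mul, abs_mul, _root_.abs_pow, show |(2:ℝ)| = 2 from by norm_num]
      nlinarith [abs_sinc_le_one ξ, abs_nonneg (sinc ξ), abs_nonneg (Real.sin (ξ / 2)), hsin2sq]
    · have hd : 1 / 2 * (sinc ξ * S ^ 2) - 1 / 2 * S = 1 / 2 * (S * (S ^ 2 * C - 1)) := by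
        rw [sinc_half ξ]; ring
      rw [hd, abs_mul, abs_mul]
      rcases le_or_gt ξ 2 with h2 | h2
      · have hk : |S ^ 2 * C - 1| ≤ (ξ / 2) ^ 2 := key (ξ / 2) (by linarith) (by linarith)
        have hm : |S| * |S ^ 2 * C - 1| ≤ (ξ / 2) ^ 2 := by
          nlinarith [abs_nonneg (S ^ 2 * C - 1), abs_nonneg S]
        rw [abs_of_pos (by norm_num : (0:ℝ) < (1:ℝ)/2)]
        nlinarith
      · have hm : |S| * |S ^ 2 * C - 1| ≤ 2 := by
          nlinarith [abs_nonneg (S ^ 2 * C - 1), abs_nonneg S]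
        rw [abs_of_pos (by norm_num : (0:ℝ) < (1:ℝ)/2)]
        nlinarith
    · have h : ξ * (sinc ξ * S * C) = Real.sin ξ * (S * C) := by
        rw [← mul_sinc ξ]; ring
      rw [h, abs_mul, abs_mul]
      nlinarith [abs_nonneg (Real.sin ξ), abs_nonneg S, abs_nonneg C, hSC1, hsin]
    · have hd : sinc ξ * S * C - C = C * (S ^ 2 * C - 1) := by
        rw [sinc_half ξ]; ring
      rw [hd, abs_mul]
      rcases le_or_gt ξ 2 with h2 | h2
      · have hk : |S ^ 2 * C - 1| ≤ (ξ / 2) ^ 2 := key (ξ / 2) (by linarith) (by linarith)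
        have hm : |C| * |S ^ 2 * C - 1| ≤ (ξ / 2) ^ 2 := by
          nlinarith [abs_nonneg (S ^ 2 * C - 1), abs_nonneg C]
        nlinarith [sq_nonneg ξ]
      · have hm : |C| * |S ^ 2 * C - 1| ≤ 2 := by
          nlinarith [abs_nonneg (S ^ 2 * C - 1), abs_nonneg C]
        nlinarith [sq_nonneg (ξ - 2)]
    · intro hne
      rw [quot ξ hne]
      linarith
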